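/- Let F, G : ℝ → ℂ be continuous functions which extend to continuous functions on the closed upper half-plane, analytic on the open upper half-plane, and suppose F(t) = G(t) for all t in some nonempty open interval (−ε, ε) ⊂ ℝ. Then F(t) = G(t) for all t ∈ ℝ. -/

import Mathlib

open Complex Set Metric Asymptotics Filter intervalIntegral MeasureTheory

lemma mem_ball_aux {r a b u v : ℝ} (h : (↑u + ↑v * I : ℂ) ∈ ball (0:ℂ) r)
    (h1 : |a| ≤ |u|) (h2 : |b| ≤ |v|) : (↑a + ↑b * I : ℂ) ∈ ball (0:ℂ) r := by
  rw [mem_ball_zero_iff] at h ⊢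
  have e : ∀ p q : ℝ, ‖(↑p + ↑q * I : ℂ)‖ ^ 2 = p ^ 2 + q ^ 2 := by
    intro p q
    rw [Complex.sq_norm, Complex.normSq_apply]
    simp
    ring
  have ha : a ^ 2 ≤ u ^ 2 := by nlinarith [_root_.sq_abs a, _root_.sq_abs u, abs_nonneg a]
  have hb : b ^ 2 ≤ v ^ 2 := by nlinarith [_root_.sq_abs b, _root_.sq_abs v, abs_nonneg b]
  have h3 := e a b
  have h4 := e u v
  nlinarith [norm_nonneg (↑a + ↑b * I : ℂ), norm_nonneg (↑u + ↑v * I : ℂ)]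

lemma abs_sub_le_of_uIcc {a b t : ℝ} (h : t ∈ Set.uIcc a b) : |t - a| ≤ |b - a| := by
  rcases le_total a b with hab | hab
  · rw [Set.uIcc_of_le hab] at h
    rw [_root_.abs_of_nonneg (by linarith [h.1]), _root_.abs_of_nonneg (by linarith)]
    linarith [h.2]
  · rw [Set.uIcc_of_ge hab] at h
    rw [_root_.abs_of_nonpos (by linarith [h.2]), _root_.abs_of_nonpos (by linarith)]
    linarith [h.1]

lemma abs_mem_uIcc {a b t : ℝ} (h : t ∈ Set.uIcc a b) : |t| ≤ max |a| |b| := by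
  rcases le_total a b with hab | hab
  · rw [Set.uIcc_of_le hab] at h
    exact abs_le_max_abs_abs h.1 h.2
  · rw [Set.uIcc_of_ge hab] at h
    rw [max_comm]
    exact abs_le_max_abs_abs h.1 h.2

lemma horizInt {r y x x' : ℝ} {f : ℂ → ℂ} (hc : ContinuousOn f (ball (0:ℂ) r))
    (h : (↑x + ↑y * I : ℂ) ∈ ball (0:ℂ) r) (h' : (↑x' + ↑y * I : ℂ) ∈ ball (0:ℂ) r) :
    IntervalIntegrable (fun t : ℝ => f (↑t + ↑y * I)) volume x x' := by
  apply ContinuousOn.intervalIntegrable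
  apply hc.comp (by fun_prop : Continuous fun t : ℝ => (↑t + ↑y * I : ℂ)).continuousOn
  intro t ht
  have h1 : |t| ≤ max |x| |x'| := abs_mem_uIcc ht
  rcases le_total |x| |x'| with hm | hm
  · exact mem_ball_aux h' (by rw [max_eq_right hm] at h1; exact h1) le_rfl
  · exact mem_ball_aux h (by rw [max_eq_left hm] at h1; exact h1) le_rfl

lemma vertInt {r u y y' : ℝ} {f : ℂ → ℂ} (hc : ContinuousOn f (ball (0:ℂ) r))
    (h : (↑u + ↑y * I : ℂ) ∈ ball (0:ℂ) r) (h' : (↑u + ↑y' * I : ℂ) ∈ ball (0:ℂ) r) :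
    IntervalIntegrable (fun s : ℝ => f (↑u + ↑s * I)) volume y y' := by
  apply ContinuousOn.intervalIntegrable
  apply hc.comp (by fun_prop : Continuous fun s : ℝ => (↑u + ↑s * I : ℂ)).continuousOn
  intro s hs
  have h1 : |s| ≤ max |y| |y'| := abs_mem_uIcc hs
  rcases le_total |y| |y'| with hm | hm
  · exact mem_ball_aux h' le_rfl (by rw [max_eq_right hm] at h1; exact h1)
  · exact mem_ball_aux h le_rfl (by rw [max_eq_left hm] at h1; exact h1)

lemma rect_zero {r : ℝ} {f : ℂ → ℂ} (hc : ContinuousOn f (ball (0:ℂ) r))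
    (hd : DifferentiableOn ℂ f (ball (0:ℂ) r ∩ {z : ℂ | z.im ≠ 0}))
    (x x' y : ℝ) (h : (↑x + ↑y * I : ℂ) ∈ ball (0:ℂ) r)
    (h' : (↑x' + ↑y * I : ℂ) ∈ ball (0:ℂ) r) :
    (∫ t : ℝ in x..x', f ↑t) - (∫ t : ℝ in x..x', f (↑t + ↑y * I)) +
      I * (∫ s : ℝ in (0:ℝ)..y, f (↑x' + ↑s * I)) -
      I * (∫ s : ℝ in (0:ℝ)..y, f (↑x + ↑s * I)) = 0 := by
  have hball : ∀ p : ℂ, p.re ∈ Set.uIcc x x' → p.im ∈ Set.uIcc 0 y → p ∈ ball (0:ℂ) r := by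
    intro p hpre hpim
    have h2 : |p.im| ≤ |y| := by simpa using abs_mem_uIcc hpim
    have h1 : |p.re| ≤ max |x| |x'| := abs_mem_uIcc hpre
    have hp : p = (↑p.re + ↑p.im * I : ℂ) := (Complex.re_add_im p).symm
    rw [hp]
    rcases le_total |x| |x'| with hm | hm
    · exact mem_ball_aux h' (by rw [max_eq_right hm] at h1; exact h1) h2
    · exact mem_ball_aux h (by rw [max_eq_left hm] at h1; exact h1) h2
  have hopen : IsOpen (ball (0:ℂ) r ∩ {z : ℂ | z.im ≠ 0}) :=
    isOpen_ball.inter (isOpen_compl_singleton.preimage Complex.continuous_im)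
  have H := Complex.integral_boundary_rect_eq_zero_of_continuousOn_of_differentiableOn f
    (↑x : ℂ) ((↑x' : ℂ) + ↑y * I)
    (by
      apply hc.mono
      intro p hp
      rw [Complex.mem_reProdIm] at hp
      refine hball p ?_ ?_
      · simpa using hp.1
      · simpa using hp.2)
    (by
      apply hd.mono
      intro p hp
      rw [Complex.mem_reProdIm] at hp
      have hp1 : p.re ∈ Set.Ioo (min x x') (max x x') := by simpa using hp.1
      have hp2 : p.im ∈ Set.Ioo (min 0 y) (max 0 y) := by simpa using hp.2
      refine ⟨hball p ⟨hp1.1.le, hp1.2.le⟩ ⟨hp2.1.le, hp2.2.le⟩, ?_⟩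
      show p.im ≠ 0
      rcases le_or_gt 0 y with hy | hy
      · have : (0:ℝ) < p.im := by
          have := hp2.1
          rwa [min_eq_left hy] at this
        linarith
      · have : p.im < 0 := by
          have := hp2.2
          rwa [max_eq_left hy.le] at this
        linarith)
  simpa using H

noncomputable def moreraPrim (f : ℂ → ℂ) (w : ℂ) : ℂ :=
  (∫ t : ℝ in (0:ℝ)..w.re, f ↑t) + I * ∫ s : ℝ in (0:ℝ)..w.im, f (↑w.re + ↑s * I)

lemma moreraPrim_hasDerivAt {r : ℝ} {f : ℂ → ℂ}
    (hc : ContinuousOn f (ball (0:ℂ) r))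
    (hd : DifferentiableOn ℂ f (ball (0:ℂ) r ∩ {z : ℂ | z.im ≠ 0}))
    {z : ℂ} (hz : z ∈ ball (0:ℂ) r) : HasDerivAt (moreraPrim f) (f z) z := by
  set x := z.re with hx
  set y := z.im with hy
  have hzxy : z = (↑x + ↑y * I : ℂ) := (Complex.re_add_im z).symm
  have hr0 : dist z 0 < r := mem_ball.1 hz
  have hrpos : 0 < r := lt_of_le_of_lt dist_nonneg hr0
  -- key identity, valid for w close to z
  have key : ∀ w : ℂ, dist w z < r - dist z 0 →
      moreraPrim f w - moreraPrim f z - (w - z) * f z =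
        (∫ t : ℝ in x..w.re, (f (↑t + ↑y * I) - f z)) +
          I * ∫ s : ℝ in y..w.im, (f (↑w.re + ↑s * I) - f z) := by
    intro w hw
    -- memberships
    have hwr : w ∈ ball (0:ℂ) r := by
      rw [mem_ball]
      calc dist w 0 ≤ dist w z + dist z 0 := dist_triangle _ _ _
        _ < r := by linarith
    have hmz : dist ((↑w.re + ↑y * I : ℂ)) z ≤ dist w z := by
      rw [dist_eq_norm, dist_eq_norm]
      have e1 : (↑w.re + ↑y * I : ℂ) - z = ((w.re - x : ℝ) : ℂ) := by
        rw [hzxy]; push_cast; ring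
      rw [e1]
      rw [Complex.norm_real, Real.norm_eq_abs]
      have h2 : w.re - x = (w - z).re := by rw [hzxy]; simp
      rw [h2]
      exact Complex.abs_re_le_norm _
    have hmr : (↑w.re + ↑y * I : ℂ) ∈ ball (0:ℂ) r := by
      rw [mem_ball]
      calc dist (↑w.re + ↑y * I : ℂ) 0 ≤ dist (↑w.re + ↑y * I : ℂ) z + dist z 0 :=
            dist_triangle _ _ _
        _ ≤ dist w z + dist z 0 := by linarith
        _ < r := by linarith
    have hzr' : (↑x + ↑y * I : ℂ) ∈ ball (0:ℂ) r := hzxy ▸ hz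
    have hwr' : (↑w.re + ↑w.im * I : ℂ) ∈ ball (0:ℂ) r := by
      rwa [Complex.re_add_im]
    have h0r : ((0:ℝ) : ℂ) + ((0:ℝ) : ℂ) * I ∈ ball (0:ℂ) r := by
      simpa using mem_ball_self (x := (0:ℂ)) hrpos
    have hxr : (↑x + ((0:ℝ):ℂ) * I : ℂ) ∈ ball (0:ℂ) r :=
      mem_ball_aux hzr' le_rfl (by simp)
    have hwrer : (↑w.re + ((0:ℝ):ℂ) * I : ℂ) ∈ ball (0:ℂ) r :=
      mem_ball_aux hwr' le_rfl (by simp)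
    -- integrability
    have i1 : IntervalIntegrable (fun t : ℝ => f ↑t) volume 0 x := by
      have := horizInt (y := 0) hc h0r hxr
      simpa using this
    have i2 : IntervalIntegrable (fun t : ℝ => f ↑t) volume x w.re := by
      have := horizInt (y := 0) hc hxr hwrer
      simpa using this
    have i2' : IntervalIntegrable (fun t : ℝ => f (↑t + ↑y * I)) volume x w.re :=
      horizInt hc hzr' hmr
    have i3 : IntervalIntegrable (fun s : ℝ => f (↑w.re + ↑s * I)) volume 0 y := by
      exact vertInt (u := w.re) (y := 0) (y' := y) hc hwrer hmr
    have i4 : IntervalIntegrable (fun s : ℝ => f (↑w.re + ↑s * I)) volume 0 w.im := by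
      exact vertInt (u := w.re) (y := 0) (y' := w.im) hc hwrer hwr'
    have i5 : IntervalIntegrable (fun s : ℝ => f (↑w.re + ↑s * I)) volume y w.im :=
      vertInt hc hmr hwr'
    -- rectangle
    have hrect := rect_zero hc hd x w.re y hzr' hmr
    -- splittings
    have s1 : (∫ t : ℝ in (0:ℝ)..x, f ↑t) + ∫ t : ℝ in x..w.re, f ↑t
        = ∫ t : ℝ in (0:ℝ)..w.re, f ↑t := integral_add_adjacent_intervals i1 i2
    have s2 : (∫ s : ℝ in (0:ℝ)..w.im, f (↑w.re + ↑s * I))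
        - (∫ s : ℝ in (0:ℝ)..y, f (↑w.re + ↑s * I))
        = ∫ s : ℝ in y..w.im, f (↑w.re + ↑s * I) := integral_interval_sub_left i4 i3
    have s3 : (∫ t : ℝ in x..w.re, (f (↑t + ↑y * I) - f z))
        = (∫ t : ℝ in x..w.re, f (↑t + ↑y * I)) - (↑w.re - ↑x) * f z := by
      rw [intervalIntegral.integral_sub i2' intervalIntegrable_const,
        intervalIntegral.integral_const, Complex.real_smul]
      push_cast
      ring
    have s4 : (∫ s : ℝ in y..w.im, (f (↑w.re + ↑s * I) - f z))
        = (∫ s : ℝ in y..w.im, f (↑w.re + ↑s * I)) - (↑w.im - ↑y) * f z := by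
      rw [intervalIntegral.integral_sub i5 intervalIntegrable_const,
        intervalIntegral.integral_const, Complex.real_smul]
      push_cast
      ring
    have hwz : w - z = (↑w.re - ↑x) + (↑w.im - ↑y) * I := by
      rw [hzxy]
      apply Complex.ext <;> simp
    rw [s3, s4, hwz]
    simp only [moreraPrim]
    linear_combination hrect - s1 + I * s2
  -- now the little-o estimate
  rw [hasDerivAt_iff_isLittleO, Asymptotics.isLittleO_iff]
  intro c hc0
  have hcz : ContinuousAt f z := hc.continuousAt (isOpen_ball.mem_nhds hz)
  obtain ⟨δ₁, hδ₁pos, hδ₁⟩ := Metric.continuousAt_iff.1 hcz (c / 3) (by positivity)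
  have hδ₂pos : 0 < r - dist z 0 := by linarith
  set δ := min (δ₁ / 2) (r - dist z 0) with hδ
  have hδpos : 0 < δ := lt_min (by positivity) hδ₂pos
  filter_upwards [Metric.ball_mem_nhds z hδpos] with w hw
  have hwδ : dist w z < δ := mem_ball.1 hw
  have hwz2 : dist w z < r - dist z 0 := lt_of_lt_of_le hwδ (min_le_right _ _)
  have hwz1 : dist w z < δ₁ / 2 := lt_of_lt_of_le hwδ (min_le_left _ _)
  rw [smul_eq_mul, key w hwz2]
  have hre : |w.re - x| ≤ ‖w - z‖ := by
    have h2 : w.re - x = (w - z).re := by rw [hzxy]; simp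
    rw [h2]
    exact Complex.abs_re_le_norm _
  have him : |w.im - y| ≤ ‖w - z‖ := by
    have h2 : w.im - y = (w - z).im := by rw [hzxy]; simp
    rw [h2]
    exact Complex.abs_im_le_norm _
  have hnwz : ‖w - z‖ = dist w z := (dist_eq_norm _ _).symm
  have bA : ‖∫ t : ℝ in x..w.re, (f (↑t + ↑y * I) - f z)‖ ≤ (c / 3) * |w.re - x| := by
    apply intervalIntegral.norm_integral_le_of_norm_le_const
    intro t ht
    have ht' : t ∈ Set.uIcc x w.re := Set.uIoc_subset_uIcc ht
    have hdist : dist (↑t + ↑y * I : ℂ) z < δ₁ := by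
      rw [dist_eq_norm]
      have e1 : (↑t + ↑y * I : ℂ) - z = ((t - x : ℝ) : ℂ) := by
        rw [hzxy]; push_cast; ring
      rw [e1, Complex.norm_real, Real.norm_eq_abs]
      calc |t - x| ≤ |w.re - x| := abs_sub_le_of_uIcc ht'
        _ ≤ ‖w - z‖ := hre
        _ < δ₁ := by rw [hnwz]; linarith
    have := hδ₁ hdist
    rw [dist_eq_norm] at this
    linarith
  have bB : ‖∫ s : ℝ in y..w.im, (f (↑w.re + ↑s * I) - f z)‖ ≤ (c / 3) * |w.im - y| := by
    apply intervalIntegral.norm_integral_le_of_norm_le_const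
    intro s hs
    have hs' : s ∈ Set.uIcc y w.im := Set.uIoc_subset_uIcc hs
    have hdist : dist (↑w.re + ↑s * I : ℂ) z < δ₁ := by
      rw [dist_eq_norm]
      have e1 : (↑w.re + ↑s * I : ℂ) - z = ((w.re - x : ℝ) : ℂ) + ((s - y : ℝ) : ℂ) * I := by
        rw [hzxy]; push_cast; ring
      rw [e1]
      calc ‖((w.re - x : ℝ) : ℂ) + ((s - y : ℝ) : ℂ) * I‖
          ≤ ‖((w.re - x : ℝ) : ℂ)‖ + ‖((s - y : ℝ) : ℂ) * I‖ := norm_add_le _ _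
        _ = |w.re - x| + |s - y| := by
            rw [norm_mul, Complex.norm_I, mul_one, Complex.norm_real, Complex.norm_real,
              Real.norm_eq_abs, Real.norm_eq_abs]
        _ ≤ ‖w - z‖ + |w.im - y| := by
            have := abs_sub_le_of_uIcc hs'
            linarith [hre, this, him.trans (le_refl _)]
        _ ≤ ‖w - z‖ + ‖w - z‖ := by linarith [him]
        _ < δ₁ := by rw [hnwz]; linarith
    have := hδ₁ hdist
    rw [dist_eq_norm] at this
    linarith
  calc ‖(∫ t : ℝ in x..w.re, (f (↑t + ↑y * I) - f z)) +
        I * ∫ s : ℝ in y..w.im, (f (↑w.re + ↑s * I) - f z)‖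
      ≤ ‖∫ t : ℝ in x..w.re, (f (↑t + ↑y * I) - f z)‖ +
        ‖I * ∫ s : ℝ in y..w.im, (f (↑w.re + ↑s * I) - f z)‖ := norm_add_le _ _
    _ ≤ (c / 3) * |w.re - x| + (c / 3) * |w.im - y| := by
        rw [norm_mul, Complex.norm_I, one_mul]
        linarith
    _ ≤ (c / 3) * ‖w - z‖ + (c / 3) * ‖w - z‖ := by
        have h1 : (0:ℝ) ≤ c / 3 := by positivity
        have := mul_le_mul_of_nonneg_left hre h1
        have := mul_le_mul_of_nonneg_left him h1
        linarith
    _ ≤ c * ‖w - z‖ := by nlinarith [norm_nonneg (w - z)]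

lemma morera_across_real {r : ℝ} {f : ℂ → ℂ}
    (hc : ContinuousOn f (ball (0:ℂ) r))
    (hd : DifferentiableOn ℂ f (ball (0:ℂ) r ∩ {z : ℂ | z.im ≠ 0})) :
    DifferentiableOn ℂ f (ball (0:ℂ) r) := by
  have key : ∀ z ∈ ball (0:ℂ) r, HasDerivAt (moreraPrim f) (f z) z := fun z hz =>
    moreraPrim_hasDerivAt hc hd hz
  have hg : DifferentiableOn ℂ (moreraPrim f) (ball (0:ℂ) r) := fun z hz =>
    (key z hz).differentiableAt.differentiableWithinAt
  have hga : AnalyticOnNhd ℂ (moreraPrim f) (ball (0:ℂ) r) := hg.analyticOnNhd isOpen_ball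
  have hderiv : DifferentiableOn ℂ (deriv (moreraPrim f)) (ball (0:ℂ) r) :=
    hga.deriv.differentiableOn
  exact hderiv.congr fun z hz => ((key z hz).deriv).symm

/-- If `F, G : ℝ → ℂ` are boundary values of functions continuous on the
closed upper half-plane and holomorphic on the open upper half-plane, and `F = G` on some
nonempty interval `(−ε, ε)`, then `F = G` on all of `ℝ`. -/
theorem boundary_values_agree_of_agree_on_interval
    (F G : ℝ → ℂ) (Ft Gt : ℂ → ℂ)
    (hFc : ContinuousOn Ft {z : ℂ | 0 ≤ z.im})
    (hFa : DifferentiableOn ℂ Ft {z : ℂ | 0 < z.im})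
    (hFb : ∀ t : ℝ, Ft (t : ℂ) = F t)
    (hGc : ContinuousOn Gt {z : ℂ | 0 ≤ z.im})
    (hGa : DifferentiableOn ℂ Gt {z : ℂ | 0 < z.im})
    (hGb : ∀ t : ℝ, Gt (t : ℂ) = G t)
    (ε : ℝ) (hε : 0 < ε)
    (heq : ∀ t ∈ Set.Ioo (-ε) ε, F t = G t) :
    ∀ t : ℝ, F t = G t := by
  classical
  set Φ : ℂ → ℂ := fun z => Ft z - Gt z with hΦ
  set Ψ : ℂ → ℂ := fun z => if 0 ≤ z.im then Φ z else 0 with hΨ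
  have hupper_open : IsOpen {z : ℂ | 0 < z.im} := isOpen_lt continuous_const Complex.continuous_im
  have hlower_open : IsOpen {z : ℂ | z.im < 0} := isOpen_lt Complex.continuous_im continuous_const
  -- Φ vanishes on the real interval
  have hΦreal : ∀ a : ℂ, a ∈ ball (0:ℂ) ε → a.im = 0 → Φ a = 0 := by
    intro a ha him
    have hare : a = ((a.re : ℝ) : ℂ) := by
      apply Complex.ext <;> simp [him]
    have habs : |a.re| < ε := by
      have := Complex.abs_re_le_norm a
      have hn : ‖a‖ < ε := mem_ball_zero_iff.1 ha
      linarith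
    have hmem : a.re ∈ Set.Ioo (-ε) ε := by
      rw [Set.mem_Ioo]
      constructor <;> [linarith [abs_lt.1 habs |>.1]; linarith [abs_lt.1 habs |>.2]]
    rw [hΦ]
    simp only
    rw [hare, hFb, hGb, heq a.re hmem, sub_self]
  -- Ψ is continuous on the ball
  have hΨc : ContinuousOn Ψ (ball (0:ℂ) ε) := by
    apply ContinuousOn.if
    · intro a ha
      rw [Complex.frontier_setOf_le_im] at ha
      exact hΦreal a ha.1 ha.2
    · apply (hFc.sub hGc).mono
      intro a ha
      have := ha.2
      rwa [IsClosed.closure_eq (isClosed_le continuous_const Complex.continuous_im)] at this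
    · exact continuousOn_const
  -- Ψ is differentiable off the real axis
  have hΨd : DifferentiableOn ℂ Ψ (ball (0:ℂ) ε ∩ {z : ℂ | z.im ≠ 0}) := by
    rintro z ⟨hzb, hzim⟩
    rcases lt_or_gt_of_ne (hzim : z.im ≠ 0) with hneg | hpos
    · have hev : Ψ =ᶠ[nhds z] (fun _ => (0:ℂ)) := by
        filter_upwards [hlower_open.mem_nhds hneg] with w hw
        rw [hΨ]
        simp only
        rw [if_neg (not_le.2 hw)]
      exact ((differentiableAt_const (0:ℂ)).congr_of_eventuallyEq hev).differentiableWithinAt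
    · have hev : Ψ =ᶠ[nhds z] Φ := by
        filter_upwards [hupper_open.mem_nhds hpos] with w hw
        rw [hΨ]
        simp only
        rw [if_pos (le_of_lt hw)]
      have hda : DifferentiableAt ℂ Φ z :=
        (hFa.differentiableAt (hupper_open.mem_nhds hpos)).sub
          (hGa.differentiableAt (hupper_open.mem_nhds hpos))
      exact (hda.congr_of_eventuallyEq hev).differentiableWithinAt
  -- Ψ is holomorphic on the ball, hence zero everywhere on the ball
  have hΨh : DifferentiableOn ℂ Ψ (ball (0:ℂ) ε) := morera_across_real hΨc hΨd
  have hΨa : AnalyticOnNhd ℂ Ψ (ball (0:ℂ) ε) := hΨh.analyticOnNhd isOpen_ball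
  have hz₀mem : ((↑(-(ε/2)) : ℂ) * I) ∈ ball (0:ℂ) ε := by
    rw [mem_ball_zero_iff, norm_mul, Complex.norm_I, mul_one, Complex.norm_real,
      Real.norm_eq_abs]
    rw [_root_.abs_of_nonpos (by linarith : -(ε/2) ≤ 0)]
    linarith
  have hz₀im : ((↑(-(ε/2)) : ℂ) * I).im < 0 := by simp; linarith
  have hΨ0 : EqOn Ψ 0 (ball (0:ℂ) ε) := by
    apply hΨa.eqOn_zero_of_preconnected_of_eventuallyEq_zero
      ((convex_ball (0:ℂ) ε).isPreconnected) hz₀mem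
    filter_upwards [hlower_open.mem_nhds hz₀im] with w hw
    rw [hΨ]
    simp only
    rw [if_neg (not_le.2 hw)]
    rfl
  -- Φ vanishes on the whole upper half-plane
  have hΦa : AnalyticOnNhd ℂ Φ {z : ℂ | 0 < z.im} := (hFa.sub hGa).analyticOnNhd hupper_open
  have hz₁mem : ((↑(ε/2) : ℂ) * I) ∈ ball (0:ℂ) ε ∩ {z : ℂ | 0 < z.im} := by
    constructor
    · rw [mem_ball_zero_iff, norm_mul, Complex.norm_I, mul_one, Complex.norm_real,
        Real.norm_eq_abs, _root_.abs_of_nonneg (by linarith : (0:ℝ) ≤ ε/2)]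
      linarith
    · simp
      linarith
  have hΦ0 : EqOn Φ 0 {z : ℂ | 0 < z.im} := by
    apply hΦa.eqOn_zero_of_preconnected_of_eventuallyEq_zero
      ((convex_halfSpace_im_gt (0:ℝ)).isPreconnected) hz₁mem.2
    filter_upwards [(isOpen_ball.inter hupper_open).mem_nhds hz₁mem] with w hw
    have : Ψ w = Φ w := by
      rw [hΨ]; simp only; rw [if_pos (le_of_lt hw.2)]
    have h0 : Ψ w = 0 := hΨ0 hw.1
    rw [← this, h0]
    rfl
  -- boundary limit
  have hΦt : ∀ t : ℝ, Φ ((t : ℝ) : ℂ) = 0 := by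
    intro t
    have hmem : ((t : ℝ) : ℂ) ∈ {z : ℂ | 0 ≤ z.im} := by simp
    have hcw : ContinuousWithinAt Φ {z : ℂ | 0 ≤ z.im} ((t : ℝ) : ℂ) :=
      (hFc.sub hGc) _ hmem
    have hpath : Tendsto (fun δ : ℝ => ((t : ℝ) : ℂ) + ↑δ * I) (nhdsWithin 0 (Set.Ioi 0))
        (nhdsWithin ((t : ℝ) : ℂ) {z : ℂ | 0 ≤ z.im}) := by
      rw [tendsto_nhdsWithin_iff]
      constructor
      · have hcont : Continuous fun δ : ℝ => ((t : ℝ) : ℂ) + ↑δ * I := by fun_prop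
        have := (hcont.tendsto 0).mono_left (nhdsWithin_le_nhds (s := Set.Ioi (0:ℝ)))
        simpa using this
      · filter_upwards [self_mem_nhdsWithin] with δ hδ
        simp only [Set.mem_setOf_eq, Complex.add_im, Complex.ofReal_im, Complex.mul_im,
          Complex.I_im, Complex.I_re, Complex.ofReal_re]
        simp
        exact le_of_lt hδ
    have h9 : Tendsto (fun δ : ℝ => Φ (((t : ℝ) : ℂ) + ↑δ * I)) (nhdsWithin 0 (Set.Ioi 0))
        (nhds (Φ ((t : ℝ) : ℂ))) := hcw.tendsto.comp hpath
    have h10 : (fun δ : ℝ => Φ (((t : ℝ) : ℂ) + ↑δ * I)) =ᶠ[nhdsWithin 0 (Set.Ioi 0)]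
        (fun _ => (0:ℂ)) := by
      filter_upwards [self_mem_nhdsWithin] with δ hδ
      apply hΦ0
      simp only [Set.mem_setOf_eq, Complex.add_im, Complex.ofReal_im, Complex.mul_im,
        Complex.I_im, Complex.I_re, Complex.ofReal_re]
      simp
      exact hδ
    have h11 : Tendsto (fun _ : ℝ => (0:ℂ)) (nhdsWithin 0 (Set.Ioi 0))
        (nhds (Φ ((t : ℝ) : ℂ))) := Tendsto.congr' h10 h9
    exact (tendsto_nhds_unique h11 tendsto_const_nhds)
  intro t
  have := hΦt t
  rw [hΦ] at this
  simp only at this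
  rw [hFb, hGb] at this
  exact sub_eq_zero.1 this
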